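/- For a layered plan with M logical operators, each having N physical implementations, the Pareto frontier of the set of all N^M physical plans (under quality = product, cost = sum) equals the set of plans obtainable by dynamic programming that maintains, at each prefix length m, only the Pareto frontier of prefix subplans: every Pareto-optimal full plan has all its prefixes in the maintained frontiers. -/

import Mathlib

def planQuality (P : List (ℝ × ℝ)) : ℝ := (P.map Prod.fst).prod
def planCost (P : List (ℝ × ℝ)) : ℝ := (P.map Prod.snd).sum

/-- `Q` strictly Pareto-dominates `P` (quality = product, cost = sum). -/
def Dominates (Q P : List (ℝ × ℝ)) : Prop :=
  planQuality P ≤ planQuality Q ∧ planCost Q ≤ planCost P ∧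
    (planQuality P < planQuality Q ∨ planCost Q < planCost P)

/-- Pareto frontier of a set of plans. -/
def paretoFrontier (S : Set (List (ℝ × ℝ))) : Set (List (ℝ × ℝ)) :=
  {P ∈ S | ¬ ∃ Q ∈ S, Dominates Q P}

/-- All prefix subplans of length `m`: one physical operator chosen from `impls i`
for each logical operator `i < m`. -/
def allPlans (impls : ℕ → Finset (ℝ × ℝ)) : ℕ → Set (List (ℝ × ℝ))
  | 0 => {[]}
  | m + 1 => {P | ∃ S ∈ allPlans impls m, ∃ p ∈ impls m, P = S ++ [p]}

/-- The frontiers maintained by the dynamic program: at step `m+1`, extend each frontier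
subplan of length `m` by each physical operator for position `m+1` and retain the Pareto
frontier of the results. -/
def dpFrontier (impls : ℕ → Finset (ℝ × ℝ)) : ℕ → Set (List (ℝ × ℝ))
  | 0 => {[]}
  | m + 1 => paretoFrontier {P | ∃ S ∈ dpFrontier impls m, ∃ p ∈ impls m, P = S ++ [p]}

lemma mem_allPlans_iff (impls : ℕ → Finset (ℝ × ℝ)) :
    ∀ m (P : List (ℝ × ℝ)), P ∈ allPlans impls m ↔
      (P.length = m ∧ ∀ i (hi : i < P.length), P[i] ∈ impls i) := by
  intro m
  induction m with
  | zero =>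
      intro P
      constructor
      · rintro rfl; simp
      · rintro ⟨hlen, _⟩
        have : P = [] := List.length_eq_zero_iff.mp hlen
        simp [allPlans, this]
  | succ m ih =>
      intro P
      constructor
      · rintro ⟨S, hS, p, hp, rfl⟩
        obtain ⟨hSlen, hSmem⟩ := (ih S).mp hS
        refine ⟨by simp [hSlen], ?_⟩
        intro i hi
        by_cases h : i < S.length
        · rw [List.getElem_append_left h]; exact hSmem i h
        · have hi' : i = S.length := by simp at hi; omega
          subst hi'
          simp [hSlen, hp]
      · rintro ⟨hlen, hmem⟩
        have hne : P ≠ [] := by intro h; simp [h] at hlen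
        refine ⟨P.dropLast, ?_, P.getLast hne, ?_, (List.dropLast_append_getLast hne).symm⟩
        · refine (ih _).mpr ⟨by simp [hlen], ?_⟩
          intro i hi
          have hi' : i < P.length - 1 := by simpa using hi
          rw [List.getElem_dropLast]
          exact hmem i (by omega)
        · rw [List.getLast_eq_getElem hne]
          have h1 : P.length - 1 = m := by omega
          have h2 := hmem (P.length - 1) (by omega)
          simp only [h1] at h2
          simpa [h1] using h2

lemma planQuality_append (A B : List (ℝ × ℝ)) :
    planQuality (A ++ B) = planQuality A * planQuality B := by
  simp [planQuality]

lemma planCost_append (A B : List (ℝ × ℝ)) :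
    planCost (A ++ B) = planCost A + planCost B := by
  simp [planCost]

lemma planQuality_pos (P : List (ℝ × ℝ)) (h : ∀ x ∈ P, 0 < x.1) :
    0 < planQuality P := by
  apply List.prod_pos
  intro a ha
  obtain ⟨x, hx, rfl⟩ := List.mem_map.mp ha
  exact h x hx

lemma dominates_append (Q S R : List (ℝ × ℝ)) (hR : 0 < planQuality R)
    (h : Dominates Q S) : Dominates (Q ++ R) (S ++ R) := by
  obtain ⟨h1, h2, h3⟩ := h
  refine ⟨?_, ?_, ?_⟩
  · rw [planQuality_append, planQuality_append]
    exact mul_le_mul_of_nonneg_right h1 hR.le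
  · rw [planCost_append, planCost_append]
    linarith
  · rcases h3 with h3 | h3
    · left
      rw [planQuality_append, planQuality_append]
      exact mul_lt_mul_of_pos_right h3 hR
    · right
      rw [planCost_append, planCost_append]
      linarith

lemma take_mem_allPlans (impls : ℕ → Finset (ℝ × ℝ)) {M m : ℕ} (hm : m ≤ M)
    {P : List (ℝ × ℝ)} (hP : P ∈ allPlans impls M) :
    P.take m ∈ allPlans impls m := by
  obtain ⟨hlen, hmem⟩ := (mem_allPlans_iff impls M P).mp hP
  refine (mem_allPlans_iff impls m _).mpr ⟨by simp [hlen]; omega, ?_⟩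
  intro i hi
  have hi' : i < P.length := by simp at hi; omega
  rw [List.getElem_take]
  exact hmem i hi'

lemma append_drop_mem_allPlans (impls : ℕ → Finset (ℝ × ℝ)) {M m : ℕ} (hm : m ≤ M)
    {P Q : List (ℝ × ℝ)} (hP : P ∈ allPlans impls M) (hQ : Q ∈ allPlans impls m) :
    Q ++ P.drop m ∈ allPlans impls M := by
  obtain ⟨hlen, hmem⟩ := (mem_allPlans_iff impls M P).mp hP
  obtain ⟨hQlen, hQmem⟩ := (mem_allPlans_iff impls m Q).mp hQ
  refine (mem_allPlans_iff impls M _).mpr ⟨by simp [hlen, hQlen]; omega, ?_⟩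
  intro i hi
  by_cases h : i < Q.length
  · rw [List.getElem_append_left h]
    exact hQmem i h
  · rw [List.getElem_append_right (le_of_not_gt h)]
    have hd : (P.drop m)[i - Q.length]'(by simp [hlen, hQlen]; simp [hlen, hQlen] at hi; omega) = P[m + (i - Q.length)]'(by simp [hlen, hQlen] at hi ⊢; omega) := by
      rw [List.getElem_drop]
    rw [hd]
    have : m + (i - Q.length) = i := by simp [hQlen] at h ⊢; omega
    simp only [this]
    exact hmem i (by simp [hlen, hQlen] at hi; omega)

lemma dp_subset (impls : ℕ → Finset (ℝ × ℝ)) :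
    ∀ m, dpFrontier impls m ⊆ allPlans impls m := by
  intro m
  induction m with
  | zero => intro P hP; exact hP
  | succ m ih =>
      rintro P ⟨⟨S, hS, p, hp, rfl⟩, -⟩
      exact ⟨S, ih hS, p, hp, rfl⟩

lemma entries_pos (impls : ℕ → Finset (ℝ × ℝ)) {M : ℕ}
    (hvalid : ∀ i < M, ∀ p ∈ impls i, 0 < p.1 ∧ p.1 ≤ 1 ∧ 0 ≤ p.2)
    {P : List (ℝ × ℝ)} (hP : P ∈ allPlans impls M) : ∀ x ∈ P, 0 < x.1 := by
  obtain ⟨hlen, hmem⟩ := (mem_allPlans_iff impls M P).mp hP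
  intro x hx
  obtain ⟨i, hi, rfl⟩ := List.mem_iff_getElem.mp hx
  exact (hvalid i (by omega) _ (hmem i hi)).1

lemma prefix_opt (impls : ℕ → Finset (ℝ × ℝ)) {M m : ℕ} (hm : m ≤ M)
    (hvalid : ∀ i < M, ∀ p ∈ impls i, 0 < p.1 ∧ p.1 ≤ 1 ∧ 0 ≤ p.2)
    {P : List (ℝ × ℝ)} (hP : P ∈ allPlans impls M)
    (hopt : ¬ ∃ Q ∈ allPlans impls M, Dominates Q P) :
    ¬ ∃ Q ∈ allPlans impls m, Dominates Q (P.take m) := by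
  rintro ⟨Q, hQ, hdom⟩
  apply hopt
  refine ⟨Q ++ P.drop m, append_drop_mem_allPlans impls hm hP hQ, ?_⟩
  have hpos : 0 < planQuality (P.drop m) :=
    planQuality_pos _ (fun x hx => entries_pos impls hvalid hP x (List.mem_of_mem_drop hx))
  have := dominates_append Q (P.take m) (P.drop m) hpos hdom
  rwa [List.take_append_drop] at this

/-- For a layered plan with `M` logical operators, each with `N` physical implementations
(qualities in (0,1], costs in [0,∞)), every Pareto-optimal full plan has all of its
prefixes contained in the frontiers maintained by the dynamic program. -/
theorem pareto_optimal_plan_prefixes_in_dp_frontiers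
    (M N : ℕ) (impls : ℕ → Finset (ℝ × ℝ))
    (hcard : ∀ i < M, (impls i).card = N)
    (hvalid : ∀ i < M, ∀ p ∈ impls i, 0 < p.1 ∧ p.1 ≤ 1 ∧ 0 ≤ p.2)
    (P : List (ℝ × ℝ)) (hP : P ∈ allPlans impls M)
    (hopt : ¬ ∃ Q ∈ allPlans impls M, Dominates Q P) :
    ∀ m ≤ M, P.take m ∈ dpFrontier impls m := by
  intro m
  induction m with
  | zero => intro _; simp [dpFrontier]
  | succ m ih =>
      intro hm
      have ihm := ih (by omega)
      obtain ⟨hlen, hmem⟩ := (mem_allPlans_iff impls M P).mp hP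
      have hmlt : m < P.length := by omega
      have htake : P.take (m + 1) = P.take m ++ [P[m]] := by
        rw [List.take_succ, List.getElem?_eq_getElem hmlt]
        simp
      have hE : P.take (m+1) ∈
          {R | ∃ S ∈ dpFrontier impls m, ∃ p ∈ impls m, R = S ++ [p]} :=
        ⟨P.take m, ihm, P[m], hmem m hmlt, htake⟩
      refine ⟨hE, ?_⟩
      rintro ⟨Q, hQE, hdom⟩
      obtain ⟨S, hS, p, hp, rfl⟩ := hQE
      have hQall : S ++ [p] ∈ allPlans impls (m+1) := ⟨S, dp_subset impls m hS, p, hp, rfl⟩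
      exact prefix_opt impls hm hvalid hP hopt ⟨S ++ [p], hQall, hdom⟩
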